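/- Let P and Q be nonzero integers with D = P^2 - 4Q ≠ 0, let U = U(P,Q) be nondegenerate, and let p be an odd prime with p ∤ D and p ∤ gcd(P,Q). Let n ≥ 1 satisfy gcd(p,n) = 1 and p ∣ U_n (equivalently, the entry point of p in U divides n). Then for every k ≥ 1 there exists an integer t such that U_{p^k n} = (p + p^{k+1}·t)·U_{p^{k-1} n}. -/

import Mathlib

/-- Lucas sequence of the first kind: `U 0 = 0`, `U 1 = 1`,
`U (n+2) = P * U (n+1) - Q * U n`. -/
def lucasU (P Q : ℤ) : ℕ → ℤ
  | 0 => 0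
  | 1 => 1
  | n + 2 => P * lucasU P Q (n + 1) - Q * lucasU P Q n


namespace StmtAux
variable (P Q : ℤ)

lemma U0 : lucasU P Q 0 = 0 := rfl
lemma U1 : lucasU P Q 1 = 1 := rfl
lemma Urec (n : ℕ) : lucasU P Q (n+2) = P * lucasU P Q (n+1) - Q * lucasU P Q n := rfl

lemma addU (a b : ℕ) : lucasU P Q (a+b) =
    lucasU P Q a * lucasU P Q (b+1) + lucasU P Q (a+1) * lucasU P Q b
      - P * lucasU P Q a * lucasU P Q b := by
  induction b using Nat.twoStepInduction with
  | zero => simp [U1, U0]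
  | one =>
    show lucasU P Q (a+1) = _
    rw [Urec]; simp [U1, U0]; ring
  | more b ih1 ih2 =>
    have h1 : a + (b+2) = (a + b) + 2 := by ring
    rw [h1, Urec]
    have h2 : a + b + 1 = a + (b + 1) := by ring
    rw [h2, ih2, ih1, Urec P Q (b+1), Urec P Q b]
    ring

lemma pell (m : ℕ) : lucasU P Q (m+1)^2 - P * lucasU P Q (m+1) * lucasU P Q m
    + Q * lucasU P Q m ^ 2 = Q ^ m := by
  induction m with
  | zero => simp [U0, U1]
  | succ m ih =>
    rw [Urec]
    linear_combination Q * ih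

lemma dvdU (m j : ℕ) : lucasU P Q m ∣ lucasU P Q (j * m) := by
  induction j with
  | zero => simp [U0]
  | succ j ih =>
    have : (j+1) * m = j * m + m := by ring
    rw [this, addU]
    rcases ih with ⟨c, hc⟩
    exact ⟨c * lucasU P Q (m+1) + lucasU P Q (j*m+1) - P * c * lucasU P Q m, by rw [hc]; ring⟩

end StmtAux

namespace StmtAux
variable (P Q : ℤ)

lemma I1 (a m : ℕ) : 2 * lucasU P Q (a+m) =
    lucasU P Q a * (2*lucasU P Q (m+1) - P*lucasU P Q m)
      + (2*lucasU P Q (a+1) - P*lucasU P Q a) * lucasU P Q m := by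
  rw [addU]; ring

lemma I2 (a m : ℕ) : 2 * (2 * lucasU P Q (a+m+1) - P * lucasU P Q (a+m)) =
    (2*lucasU P Q (a+1) - P*lucasU P Q a) * (2*lucasU P Q (m+1) - P*lucasU P Q m)
      + (P^2 - 4*Q) * lucasU P Q a * lucasU P Q m := by
  have e1 := addU P Q a (m+1)
  rw [show a+(m+1) = a+m+1 from rfl] at e1
  have e2 := addU P Q a m
  have e3 := Urec P Q m
  linear_combination 4*e1 - 2*P*e2 + 4*(lucasU P Q a)*e3

lemma expand (m j : ℕ) : ∃ a b : ℤ,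
    2^j * lucasU P Q ((j+1)*m) = ((j:ℤ)+1) * lucasU P Q m
        * (2*lucasU P Q (m+1) - P*lucasU P Q m)^j + (lucasU P Q m)^3 * a ∧
    2^j * (2 * lucasU P Q ((j+1)*m + 1) - P * lucasU P Q ((j+1)*m))
      = (2*lucasU P Q (m+1) - P*lucasU P Q m)^(j+1) + (lucasU P Q m)^2 * b := by
  set u := lucasU P Q m with hu
  set v := 2*lucasU P Q (m+1) - P*lucasU P Q m with hv
  induction j with
  | zero => exact ⟨0, 0, by simp [one_mul, hu], by simp [hv]⟩
  | succ j ih =>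
    obtain ⟨a, b, ih1, ih2⟩ := ih
    refine ⟨a*v + b, b*v + (P^2-4*Q)*((j:ℤ)+1)*v^j + (P^2-4*Q)*u^2*a, ?_, ?_⟩
    · rw [show (j+1+1)*m = (j+1)*m + m from by ring]
      have e1 := I1 P Q ((j+1)*m) m
      push_cast
      linear_combination (2:ℤ)^j * e1 + v * ih1 + u * ih2
    · rw [show (j+1+1)*m = (j+1)*m + m from by ring]
      have e2 := I2 P Q ((j+1)*m) m
      push_cast
      linear_combination (2:ℤ)^j * e2 + v * ih2 + (P^2-4*Q)*u * ih1

end StmtAux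

namespace StmtAux

lemma pow_split (x w : ℤ) (s : ℕ) : ∃ c : ℤ, (x + w)^s = x^s + w*c := by
  induction s with
  | zero => exact ⟨0, by ring⟩
  | succ s ih =>
    obtain ⟨c, hc⟩ := ih
    exact ⟨c*x + x^s + w*c, by rw [pow_succ, hc]; ring⟩

lemma binom2 (w : ℤ) (s : ℕ) : ∃ c : ℤ, (1 + w)^s = 1 + s*w + w^2*c := by
  induction s with
  | zero => exact ⟨0, by ring⟩
  | succ s ih =>
    obtain ⟨c, hc⟩ := ih
    refine ⟨(s:ℤ) + c + w*c, ?_⟩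
    rw [pow_succ, hc]; push_cast; ring

lemma lift (p : ℕ) (x : ℤ) (hb : (p:ℤ) ∣ x - 1) :
    ∀ j : ℕ, (p:ℤ)^(j+1) ∣ x^(p^j) - 1 := by
  intro j
  induction j with
  | zero => simpa using hb
  | succ j ih =>
    obtain ⟨z, hz⟩ := ih
    obtain ⟨c, hc⟩ := binom2 ((p:ℤ)^(j+1)*z) p
    have hx : x^(p^j) = 1 + (p:ℤ)^(j+1)*z := by linarith
    have : x^(p^(j+1)) = (x^(p^j))^p := by
      rw [← pow_mul, pow_succ]
    rw [this, hx, hc]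
    exact ⟨z + (p:ℤ)^j*z^2*c, by push_cast; ring⟩

end StmtAux

namespace StmtAux

lemma U_mod_p_of_Q (P Q : ℤ) (p : ℕ) [Fact p.Prime] (hQ0 : (Q : ZMod p) = 0) :
    ∀ j : ℕ, ((lucasU P Q (j+1) : ℤ) : ZMod p) = (P : ZMod p)^j := by
  intro j
  induction j using Nat.twoStepInduction with
  | zero => simp [U1]
  | one => show ((lucasU P Q 2 : ℤ) : ZMod p) = _; rw [Urec]; push_cast [U0, U1, hQ0]; ring
  | more j ih1 ih2 =>
    show ((lucasU P Q (j+3) : ℤ) : ZMod p) = _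
    rw [show j+3 = (j+1)+2 from rfl, Urec]
    push_cast [hQ0]
    rw [ih2]
    ring

lemma not_dvd_Q (P Q : ℤ) (p : ℕ) (hp : p.Prime) (hpPQ : ¬ p ∣ Int.gcd P Q)
    (n : ℕ) (hn : 1 ≤ n) (hpUn : (p : ℤ) ∣ lucasU P Q n) : ¬ (p:ℤ) ∣ Q := by
  haveI : Fact p.Prime := ⟨hp⟩
  intro hdQ
  have hQ0 : (Q : ZMod p) = 0 := (ZMod.intCast_zmod_eq_zero_iff_dvd _ _).mpr hdQ
  obtain ⟨j, rfl⟩ : ∃ j, n = j + 1 := ⟨n - 1, by omega⟩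
  have h1 := U_mod_p_of_Q P Q p hQ0 j
  have h2 : ((lucasU P Q (j+1) : ℤ) : ZMod p) = 0 :=
    (ZMod.intCast_zmod_eq_zero_iff_dvd _ _).mpr hpUn
  rw [h2] at h1
  have hP0 : (P : ZMod p) = 0 := by
    have := pow_eq_zero_iff (M₀ := ZMod p) (n := j) ?_ |>.mp h1.symm
    · exact this
    · rintro rfl
      rw [pow_zero] at h1
      exact one_ne_zero h1.symm
  have hdP : (p:ℤ) ∣ P := (ZMod.intCast_zmod_eq_zero_iff_dvd _ _).mp hP0
  exact hpPQ (Int.natCast_dvd_natCast.mp (Int.dvd_coe_gcd hdP hdQ))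

lemma base_cong (P Q : ℤ) (p : ℕ) (hp : p.Prime) (hpQ : ¬ (p:ℤ) ∣ Q)
    (n e : ℕ) (h2e : 2 * e = p - 1) (hpUn : (p : ℤ) ∣ lucasU P Q n) :
    (p:ℤ) ∣ Q^(n*e) - 1 := by
  haveI : Fact p.Prime := ⟨hp⟩
  have hQ0 : (Q : ZMod p) ≠ 0 := fun h => hpQ ((ZMod.intCast_zmod_eq_zero_iff_dvd _ _).mp h)
  have hUn : ((lucasU P Q n : ℤ) : ZMod p) = 0 :=
    (ZMod.intCast_zmod_eq_zero_iff_dvd _ _).mpr hpUn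
  have hpell := congrArg (fun x : ℤ => (x : ZMod p)) (pell P Q n)
  push_cast at hpell
  rw [hUn] at hpell
  have hQn : ((Q : ZMod p))^n = ((lucasU P Q (n+1) : ℤ) : ZMod p)^2 := by
    linear_combination -hpell
  have hU1 : ((lucasU P Q (n+1) : ℤ) : ZMod p) ≠ 0 := by
    intro h
    apply hQ0
    have : ((Q : ZMod p))^n = 0 := by rw [hQn, h]; ring
    exact pow_eq_zero_iff' |>.mp this |>.1
  rw [show (p:ℤ) ∣ Q^(n*e) - 1 ↔ (((Q^(n*e) - 1 : ℤ)) : ZMod p) = 0 from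
    (ZMod.intCast_zmod_eq_zero_iff_dvd _ _).symm]
  push_cast
  rw [sub_eq_zero, pow_mul, hQn, ← pow_mul, h2e]
  exact ZMod.pow_card_sub_one_eq_one hU1

lemma cop2 (p : ℕ) (hp : p.Prime) (hodd : Odd p) : IsCoprime ((p:ℤ)) 2 := by
  rw [Int.isCoprime_iff_gcd_eq_one, show ((2:ℤ)) = ((2:ℕ):ℤ) from rfl, Int.gcd_natCast_natCast]
  exact Nat.coprime_two_right.mpr hodd

end StmtAux

namespace StmtAux

lemma core (P Q : ℤ) (p : ℕ) (hp : p.Prime) (hodd : Odd p) (m k' : ℕ)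
    (hu0 : lucasU P Q m ≠ 0)
    (e : ℕ) (h2e : 2 * e = p - 1)
    (hdvd : (p:ℤ)^(k'+1) ∣ lucasU P Q m)
    (hq : (p:ℤ)^(k'+1) ∣ Q^(m*e) - 1) :
    ∃ t : ℤ, lucasU P Q (p*m) = ((p:ℤ) + (p:ℤ)^(k'+2) * t) * lucasU P Q m := by
  set u := lucasU P Q m with hu
  set v := 2*lucasU P Q (m+1) - P*lucasU P Q m with hvdef
  obtain ⟨u', hu'⟩ := hdvd
  obtain ⟨s, hs⟩ := hq
  obtain ⟨a, b, h1, -⟩ := expand P Q m (p-1)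
  rw [show p - 1 + 1 = p from by have := hp.pos; omega] at h1
  have hcast : ((p-1 : ℕ):ℤ) + 1 = (p:ℤ) := by
    have := hp.pos; omega
  rw [hcast] at h1
  -- h1 : 2^(p-1) * lucasU P Q (p*m) = p * u * v^(p-1) + u^3 * a
  have hv2 : v^2 = (P^2-4*Q)*u^2 + 4*Q^m := by
    have := pell P Q m
    rw [hvdef, hu]; linear_combination 4 * this
  obtain ⟨c, hc⟩ := pow_split (4*Q^m) ((P^2-4*Q)*u^2) e
  have hvp : v^(p-1) = 2^(p-1) + 2^(p-1)*(p:ℤ)^(k'+1)*s + ((P^2-4*Q)*u^2)*c := by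
    rw [← h2e, pow_mul, hv2, add_comm ((P^2-4*Q)*u^2) (4*Q^m), hc]
    have h4 : ((4:ℤ)*Q^m)^e = 2^(2*e) * Q^(m*e) := by
      rw [mul_pow, pow_mul, pow_mul]
      norm_num
    rw [h4, h2e]
    have hQme : Q^(m*e) = 1 + (p:ℤ)^(k'+1)*s := by linarith
    rw [hQme]; ring
  obtain ⟨w, hw⟩ := dvdU P Q m p
  rw [hw] at h1
  have h2 : 2^(p-1) * (u*w) = (p:ℤ)*u*(2^(p-1) + 2^(p-1)*(p:ℤ)^(k'+1)*s + ((P^2-4*Q)*u^2)*c) + u^3*a := by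
    linear_combination h1 + (p:ℤ)*u*hvp
  have h3 : u * (2^(p-1)*(w - (p:ℤ))) =
      u * ((p:ℤ)^(k'+2) * (2^(p-1)*s + (p:ℤ)^k'*u'^2*((p:ℤ)*(P^2-4*Q)*c + a))) := by
    linear_combination h2 + u*((p:ℤ)*(P^2-4*Q)*c + a)*(u + (p:ℤ)^(k'+1)*u') * hu'
  have h4 := mul_left_cancel₀ hu0 h3
  have h5 : (p:ℤ)^(k'+2) ∣ 2^(p-1)*(w - (p:ℤ)) := ⟨_, h4⟩
  have cop : IsCoprime ((p:ℤ)^(k'+2)) ((2:ℤ)^(p-1)) :=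
    ((cop2 p hp hodd).pow : IsCoprime ((p:ℤ)^(k'+2)) ((2:ℤ)^(p-1)))
  have h6 : (p:ℤ)^(k'+2) ∣ (w - (p:ℤ)) := cop.dvd_of_dvd_mul_left h5
  obtain ⟨t, ht⟩ := h6
  exact ⟨t, by rw [hw]; linear_combination u * ht⟩

end StmtAux

theorem stmt_12 (P Q : ℤ) (hP : P ≠ 0) (hQ : Q ≠ 0) (hD : P ^ 2 - 4 * Q ≠ 0)
    (hnd : ∀ m : ℕ, 1 ≤ m → lucasU P Q m ≠ 0)
    (p : ℕ) (hp : p.Prime) (hodd : Odd p) (hpD : ¬ (p : ℤ) ∣ (P ^ 2 - 4 * Q))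
    (hpPQ : ¬ p ∣ Int.gcd P Q)
    (n : ℕ) (hn : 1 ≤ n) (hpn : Nat.gcd p n = 1)
    (hpUn : (p : ℤ) ∣ lucasU P Q n) (k : ℕ) (hk : 1 ≤ k) :
    ∃ t : ℤ, lucasU P Q (p ^ k * n)
      = ((p : ℤ) + (p : ℤ) ^ (k + 1) * t) * lucasU P Q (p ^ (k - 1) * n) := by
  open StmtAux in
  obtain ⟨k', rfl⟩ : ∃ k', k = k' + 1 := ⟨k - 1, by omega⟩
  have hpQ : ¬ (p:ℤ) ∣ Q := not_dvd_Q P Q p hp hpPQ n hn hpUn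
  set e := (p - 1) / 2 with he
  have h2e : 2 * e = p - 1 := by
    obtain ⟨r, hr⟩ := hodd; omega
  have hbase : (p:ℤ) ∣ Q^(n*e) - 1 := base_cong P Q p hp hpQ n e h2e hpUn
  have hqk : ∀ j : ℕ, (p:ℤ)^(j+1) ∣ Q^((p^j*n)*e) - 1 := by
    intro j
    have := lift p (Q^(n*e)) hbase j
    rwa [← pow_mul, show n*e*p^j = (p^j*n)*e from by ring] at this
  have MAIN : ∀ j : ℕ, ((p:ℤ)^(j+1) ∣ lucasU P Q (p^j * n)) ∧
      ∃ t : ℤ, lucasU P Q (p^(j+1)*n) = ((p:ℤ) + (p:ℤ)^(j+2)*t) * lucasU P Q (p^j * n) := by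
    intro j
    induction j with
    | zero =>
      have hm : 1 ≤ p^0 * n := by simpa using hn
      refine ⟨by simpa using hpUn, ?_⟩
      have := core P Q p hp hodd (p^0*n) 0 (hnd _ hm) e h2e (by simpa using hpUn) (hqk 0)
      rwa [show p*(p^0*n) = p^(0+1)*n from by ring] at this
    | succ j ih =>
      obtain ⟨ihd, t0, iht⟩ := ih
      have hdvd : (p:ℤ)^(j+2) ∣ lucasU P Q (p^(j+1) * n) := by
        rw [iht]
        have : ((p:ℤ) + (p:ℤ)^(j+2)*t0) * lucasU P Q (p^j * n)
            = (p:ℤ)^(j+2) * ((lucasU P Q (p^j*n) / (p:ℤ)^(j+1)) + t0 * lucasU P Q (p^j*n)) := by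
          obtain ⟨d, hd⟩ := ihd
          rw [hd]
          rw [Int.mul_ediv_cancel_left _ (pow_ne_zero _ (Int.natCast_ne_zero.mpr hp.pos.ne'))]
          ring
        exact ⟨_, this⟩
      have hm : 1 ≤ p^(j+1) * n := Nat.mul_pos (Nat.pow_pos hp.pos) hn
      refine ⟨hdvd, ?_⟩
      have := core P Q p hp hodd (p^(j+1)*n) (j+1) (hnd _ hm) e h2e hdvd (hqk (j+1))
      rwa [show p*(p^(j+1)*n) = p^(j+1+1)*n from by ring] at this
  obtain ⟨-, t, ht⟩ := MAIN k'
  exact ⟨t, by simpa using ht⟩
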